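/- arXiv:1704.00530 — 6 statements merged into one kernel-verified Lean document; each statement's English description precedes it below -/
import Mathlib

section
/- Let S be a p×p positive definite matrix with block partition as above, and define B⁺(S) = S⁻¹ − diag(0, S₂₂⁻¹). Then B⁺(S) is positive semidefinite and has rank p₁. -/
open Matrix

/-- For positive definite block matrix `S`,
`B⁺(S) = S⁻¹ − diag(0, S₂₂⁻¹)` is positive semidefinite of rank `p₁`. -/
theorem stmt1 (p₁ p₂ : ℕ)
    (S : Matrix (Fin p₁ ⊕ Fin p₂) (Fin p₁ ⊕ Fin p₂) ℝ) (hS : S.PosDef) :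
    (S⁻¹ - fromBlocks 0 0 0 (S.toBlocks₂₂)⁻¹).PosSemidef ∧
      (S⁻¹ - fromBlocks 0 0 0 (S.toBlocks₂₂)⁻¹).rank = p₁ := by
  set A := S.toBlocks₁₁ with hA
  set B := S.toBlocks₁₂ with hB
  set D := S.toBlocks₂₂ with hD
  have h21 : S.toBlocks₂₁ = Bᴴ := by
    ext i j
    exact (congrFun (congrFun hS.1 (Sum.inr i)) (Sum.inl j)).symm
  have hSblk : S = fromBlocks A B Bᴴ D := by
    rw [← fromBlocks_toBlocks S, h21]
  -- D is positive definite
  have hDpd : D.PosDef := by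
    refine PosDef.of_dotProduct_mulVec_pos ?_ ?_
    · ext i j
      exact congrFun (congrFun hS.1 (Sum.inr i)) (Sum.inr j)
    · intro x hx
      have hy : (Sum.elim (0 : Fin p₁ → ℝ) x) ≠ 0 := by
        intro h
        exact hx (funext fun i => congrFun h (Sum.inr i))
      have := hS.dotProduct_mulVec_pos hy
      convert this using 1
      rw [hSblk]
      simp [fromBlocks_mulVec, dotProduct]
  rw [hSblk] at hS ⊢
  haveI : Invertible D := hDpd.isUnit.invertible
  -- the Schur complement is positive definite
  set Sc := A - B * D⁻¹ * Bᴴ with hSceq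
  have hScpd : Sc.PosDef := by
    refine PosDef.of_dotProduct_mulVec_pos ?_ ?_
    · exact (IsHermitian.fromBlocks₂₂ A B hDpd.1).mp hS.1
    · intro x hx
      have key := schur_complement_eq₂₂ A B x (-((D⁻¹ * Bᴴ) *ᵥ x)) hDpd.1
      have hy : (Sum.elim x (-((D⁻¹ * Bᴴ) *ᵥ x))) ≠ 0 := by
        intro h
        exact hx (funext fun i => congrFun h (Sum.inl i))
      have hpos := hS.dotProduct_mulVec_pos hy
      rw [dotProduct_mulVec] at hpos ⊢
      rw [key] at hpos
      simpa [hSceq] using hpos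
  haveI : Invertible Sc := hScpd.isUnit.invertible
  have hDinv : ⅟D = D⁻¹ := invOf_eq_nonsing_inv D
  haveI hinst : Invertible (A - B * ⅟D * Bᴴ) := by rw [hDinv]; infer_instance
  haveI : Invertible (fromBlocks A B Bᴴ D) := fromBlocks₂₂Invertible A B Bᴴ D
  have hSinv : (fromBlocks A B Bᴴ D)⁻¹ =
      fromBlocks Sc⁻¹ (-(Sc⁻¹ * B * D⁻¹)) (-(D⁻¹ * Bᴴ * Sc⁻¹))
        (D⁻¹ + D⁻¹ * Bᴴ * Sc⁻¹ * B * D⁻¹) := by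
    rw [← invOf_eq_nonsing_inv, invOf_fromBlocks₂₂_eq]
    simp only [invOf_eq_nonsing_inv, hDinv]
    rfl
  have hDH : D⁻¹ᴴ = D⁻¹ := hDpd.1.inv
  have hDT : D⁻¹ᵀ = D⁻¹ := by simpa using hDH
  -- the key factorization
  have key : (fromBlocks A B Bᴴ D)⁻¹ - fromBlocks 0 0 0 D⁻¹ =
      (fromBlocks 1 0 (-(D⁻¹ * Bᴴ)) 1) * (fromBlocks Sc⁻¹ 0 0 0) *
        (fromBlocks 1 0 (-(D⁻¹ * Bᴴ)) 1)ᴴ := by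
    rw [hSinv, fromBlocks_conjTranspose, fromBlocks_multiply, fromBlocks_multiply,
      sub_eq_iff_eq_add, fromBlocks_add]
    refine fromBlocks_inj.mpr ⟨?_, ?_, ?_, ?_⟩ <;>
      simp [conjTranspose_neg, conjTranspose_mul, hDH, hDT, Matrix.mul_assoc, add_comm]
  rw [key]
  haveI : Invertible (Sc⁻¹) := hScpd.inv.isUnit.invertible
  have hN : (fromBlocks Sc⁻¹ 0 0 (0 : Matrix (Fin p₂) (Fin p₂) ℝ)).PosSemidef := by
    have h := (PosDef.fromBlocks₁₁ (0 : Matrix (Fin p₁) (Fin p₂) ℝ) 0 hScpd.inv).mpr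
      (by simpa using (Matrix.PosSemidef.zero (n := Fin p₂) (R := ℝ)))
    simpa using h
  set V := fromBlocks (1 : Matrix (Fin p₁) (Fin p₁) ℝ) 0 (-(D⁻¹ * Bᴴ))
    (1 : Matrix (Fin p₂) (Fin p₂) ℝ) with hV
  have hVdet : IsUnit V.det := by
    rw [hV, det_fromBlocks_zero₁₂]
    simp
  have hVHdet : IsUnit Vᴴ.det := by
    rwa [det_conjTranspose, isUnit_star]
  constructor
  · exact hN.mul_mul_conjTranspose_same V
  · rw [Matrix.mul_assoc, rank_mul_eq_right_of_isUnit_det V _ hVdet,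
      rank_mul_eq_left_of_isUnit_det Vᴴ _ hVHdet]
    have hfac : (fromBlocks Sc⁻¹ 0 0 (0 : Matrix (Fin p₂) (Fin p₂) ℝ)) =
        (fromBlocks Sc⁻¹ 0 0 (1 : Matrix (Fin p₂) (Fin p₂) ℝ)) *
          diagonal (Sum.elim (fun _ => (1:ℝ)) (fun _ => (0:ℝ))) := by
      rw [← fromBlocks_diagonal, fromBlocks_multiply]
      simp [diagonal_one]
    rw [hfac, rank_mul_eq_right_of_isUnit_det _ _ (by
      rw [det_fromBlocks_zero₁₂, det_one, mul_one]
      exact (isUnit_iff_isUnit_det _).mp hScpd.inv.isUnit),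
      rank_diagonal]
    have hiff : ∀ i : Fin p₁ ⊕ Fin p₂,
        Sum.elim (fun _ => (1:ℝ)) (fun _ => (0:ℝ)) i ≠ 0 ↔ i.isLeft := by
      rintro (i|i) <;> simp
    rw [Fintype.card_congr (Equiv.subtypeEquivRight hiff)]
    have e : {x : Fin p₁ ⊕ Fin p₂ // x.isLeft = true} ≃ Fin p₁ :=
      { toFun := fun x => x.1.getLeft x.2
        invFun := fun i => ⟨Sum.inl i, rfl⟩
        left_inv := by
          rintro ⟨(i|i), h⟩
          · rfl
          · exact absurd h (by simp)
        right_inv := fun i => rfl }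
    rw [Fintype.card_congr e, Fintype.card_fin]
end

section
/- Let S be positive definite with blocks as above and define B⁺(S)B(S) as in the previous statement. Then B⁺(S)B(S) = B(S)B⁺(S) = C(S)(C(S)ᵀC(S))⁻¹C(S)ᵀ, i.e., both products equal the orthogonal projection onto the column space of C(S) = [I; −S₂₂⁻¹S₂₁]. -/
open Matrix

/-- The `p × p₁` matrix `C(S) = [I; −S₂₂⁻¹S₂₁]`. -/
noncomputable def Cmat (p₁ p₂ : ℕ)
    (S : Matrix (Fin p₁ ⊕ Fin p₂) (Fin p₁ ⊕ Fin p₂) ℝ) :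
    Matrix (Fin p₁ ⊕ Fin p₂) (Fin p₁) ℝ :=
  fromRows (1 : Matrix (Fin p₁) (Fin p₁) ℝ) (-((S.toBlocks₂₂)⁻¹ * S.toBlocks₂₁))

/-- The Schur complement `D(S) = S₁₁:₂ = S₁₁ − S₁₂S₂₂⁻¹S₂₁`. -/
noncomputable def Dmat (p₁ p₂ : ℕ)
    (S : Matrix (Fin p₁ ⊕ Fin p₂) (Fin p₁ ⊕ Fin p₂) ℝ) :
    Matrix (Fin p₁) (Fin p₁) ℝ :=
  S.toBlocks₁₁ - S.toBlocks₁₂ * (S.toBlocks₂₂)⁻¹ * S.toBlocks₂₁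

/-- `B⁺(S) = C(S) D(S)⁻¹ C(S)ᵀ`. -/
noncomputable def Bplus (p₁ p₂ : ℕ)
    (S : Matrix (Fin p₁ ⊕ Fin p₂) (Fin p₁ ⊕ Fin p₂) ℝ) :
    Matrix (Fin p₁ ⊕ Fin p₂) (Fin p₁ ⊕ Fin p₂) ℝ :=
  Cmat p₁ p₂ S * (Dmat p₁ p₂ S)⁻¹ * (Cmat p₁ p₂ S)ᵀ

/-- `B(S) = C(S) (C(S)ᵀC(S))⁻¹ D(S) (C(S)ᵀC(S))⁻¹ C(S)ᵀ`. -/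
noncomputable def Bmat (p₁ p₂ : ℕ)
    (S : Matrix (Fin p₁ ⊕ Fin p₂) (Fin p₁ ⊕ Fin p₂) ℝ) :
    Matrix (Fin p₁ ⊕ Fin p₂) (Fin p₁ ⊕ Fin p₂) ℝ :=
  Cmat p₁ p₂ S * ((Cmat p₁ p₂ S)ᵀ * Cmat p₁ p₂ S)⁻¹ * Dmat p₁ p₂ S *
    ((Cmat p₁ p₂ S)ᵀ * Cmat p₁ p₂ S)⁻¹ * (Cmat p₁ p₂ S)ᵀ

section Aux

variable (p₁ p₂ : ℕ) (S : Matrix (Fin p₁ ⊕ Fin p₂) (Fin p₁ ⊕ Fin p₂) ℝ)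

/-- `S₂₂` is positive definite when `S` is. -/
lemma toBlocks₂₂_posDef (hS : S.PosDef) : (S.toBlocks₂₂).PosDef := by
  apply Matrix.PosDef.of_dotProduct_mulVec_pos
  · exact hS.isHermitian.submatrix Sum.inr
  · intro x hx
    have hy : (Sum.elim 0 x : Fin p₁ ⊕ Fin p₂ → ℝ) ≠ 0 := by
      intro h
      apply hx
      ext i
      have := congrFun h (Sum.inr i)
      simpa using this
    have := hS.dotProduct_mulVec_pos hy
    convert this using 1
    simp only [star_trivial, dotProduct, mulVec, Fintype.sum_sum_type, Sum.elim_inl,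
      Sum.elim_inr, toBlocks₂₂]
    simp [dotProduct, Fintype.sum_sum_type, mul_comm]

lemma CtSC (hS : S.PosDef) :
    (Cmat p₁ p₂ S)ᵀ * S * Cmat p₁ p₂ S = Dmat p₁ p₂ S := by
  have h22 : (S.toBlocks₂₂).PosDef := toBlocks₂₂_posDef p₁ p₂ S hS
  have h22u : IsUnit (S.toBlocks₂₂).det := h22.isUnit.map (detMonoidHom)
  have hSC : S * Cmat p₁ p₂ S = fromRows (Dmat p₁ p₂ S) 0 := by
    rw [Cmat]
    nth_rewrite 1 [← fromBlocks_toBlocks S]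
    rw [fromBlocks_mul_fromRows]
    have h2 : S.toBlocks₂₂ * (S.toBlocks₂₂⁻¹ * S.toBlocks₂₁) = S.toBlocks₂₁ :=
      Matrix.mul_nonsing_inv_cancel_left _ _ h22u
    simp only [Matrix.mul_one, Matrix.mul_neg, h2, add_neg_cancel, Dmat, sub_eq_add_neg,
      Matrix.mul_assoc]
  rw [Matrix.mul_assoc, hSC, Cmat, transpose_fromRows, fromCols_mul_fromRows]
  simp

lemma Dmat_posDef (hS : S.PosDef) : (Dmat p₁ p₂ S).PosDef := by
  have key := CtSC p₁ p₂ S hS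
  apply Matrix.PosDef.of_dotProduct_mulVec_pos
  · have hH : Sᵀ = S := hS.isHermitian
    rw [← key]
    show _ = _
    simp only [conjTranspose_eq_transpose_of_trivial, transpose_mul, transpose_transpose, hH]
    rw [Matrix.mul_assoc]
  · intro x hx
    have hCx : Cmat p₁ p₂ S *ᵥ x ≠ 0 := by
      intro h
      apply hx
      ext i
      have := congrFun h (Sum.inl i)
      simpa [Cmat, fromRows_mulVec] using this
    have := hS.dotProduct_mulVec_pos hCx
    rw [← key]
    simpa [star_trivial, Matrix.mul_assoc, ← Matrix.mulVec_mulVec, dotProduct_mulVec,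
      vecMul_transpose] using this

lemma CtC_posDef : ((Cmat p₁ p₂ S)ᵀ * Cmat p₁ p₂ S).PosDef := by
  have : (Cmat p₁ p₂ S)ᵀ * Cmat p₁ p₂ S =
      1 + (-((S.toBlocks₂₂)⁻¹ * S.toBlocks₂₁))ᵀ * (-((S.toBlocks₂₂)⁻¹ * S.toBlocks₂₁)) := by
    rw [Cmat, transpose_fromRows, fromCols_mul_fromRows]
    simp
  rw [this]
  exact Matrix.PosDef.add_posSemidef Matrix.PosDef.one
    (by simpa [conjTranspose_eq_transpose_of_trivial] using
      posSemidef_conjTranspose_mul_self (-((S.toBlocks₂₂)⁻¹ * S.toBlocks₂₁)))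

end Aux

/-- `B⁺(S)B(S) = B(S)B⁺(S) = C(S)(C(S)ᵀC(S))⁻¹C(S)ᵀ`, the
orthogonal projection onto the column space of `C(S)`. -/
theorem stmt3 (p₁ p₂ : ℕ)
    (S : Matrix (Fin p₁ ⊕ Fin p₂) (Fin p₁ ⊕ Fin p₂) ℝ) (hS : S.PosDef) :
    Bplus p₁ p₂ S * Bmat p₁ p₂ S = Bmat p₁ p₂ S * Bplus p₁ p₂ S ∧
    Bmat p₁ p₂ S * Bplus p₁ p₂ S =
      Cmat p₁ p₂ S * ((Cmat p₁ p₂ S)ᵀ * Cmat p₁ p₂ S)⁻¹ * (Cmat p₁ p₂ S)ᵀ := by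
  set C := Cmat p₁ p₂ S with hC
  set D := Dmat p₁ p₂ S with hDdef
  set X := Cᵀ * C with hXdef
  have hD : IsUnit D.det := ((Dmat_posDef p₁ p₂ S hS).isUnit).map detMonoidHom
  have hX : IsUnit X.det := ((CtC_posDef p₁ p₂ S).isUnit).map detMonoidHom
  have e1 : Bplus p₁ p₂ S * Bmat p₁ p₂ S = C * (X⁻¹ * Cᵀ) := by
    calc Bplus p₁ p₂ S * Bmat p₁ p₂ S
        = C * (D⁻¹ * (Cᵀ * (C * (X⁻¹ * (D * (X⁻¹ * Cᵀ)))))) := by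
          simp only [Bplus, Bmat, ← hC, ← hDdef, ← hXdef, Matrix.mul_assoc]
      _ = C * (D⁻¹ * (X * (X⁻¹ * (D * (X⁻¹ * Cᵀ))))) := by
          rw [hXdef, Matrix.mul_assoc]
      _ = C * (X⁻¹ * Cᵀ) := by
          rw [Matrix.mul_nonsing_inv_cancel_left _ _ hX,
            Matrix.nonsing_inv_mul_cancel_left _ _ hD]
  have e2 : Bmat p₁ p₂ S * Bplus p₁ p₂ S = C * (X⁻¹ * Cᵀ) := by
    calc Bmat p₁ p₂ S * Bplus p₁ p₂ S
        = C * (X⁻¹ * (D * (X⁻¹ * (Cᵀ * (C * (D⁻¹ * Cᵀ)))))) := by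
          simp only [Bplus, Bmat, ← hC, ← hDdef, ← hXdef, Matrix.mul_assoc]
      _ = C * (X⁻¹ * (D * (X⁻¹ * (X * (D⁻¹ * Cᵀ))))) := by
          rw [hXdef, Matrix.mul_assoc]
      _ = C * (X⁻¹ * Cᵀ) := by
          rw [Matrix.nonsing_inv_mul_cancel_left _ _ hX,
            Matrix.mul_nonsing_inv_cancel_left _ _ hD]
  refine ⟨e1.trans e2.symm, ?_⟩
  rw [e2, Matrix.mul_assoc]
end

section
/- Let A₁ and A₂ be p×p real symmetric positive semidefinite matrices, each of rank r, with the same column space. Then there exists an invertible p×p matrix G and a diagonal r×r matrix D_r with positive entries such that A₁ = G · diag(I_r, 0) · Gᵀ and A₂ = G · diag(D_r, 0) · Gᵀ. -/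
open Matrix

variable {q : ℕ}

lemma stmt7_star_eq_transpose (M : Matrix (Fin q) (Fin q) ℝ) : star M = Mᵀ := by
  ext i j
  simp [Matrix.star_apply]

lemma stmt7_conj_mul (u : Matrix (Fin q) (Fin q) ℝ) (hu : star u * u = 1) (a b : Fin q → ℝ) :
    (u * diagonal a * star u) * (u * diagonal b * star u)
      = u * diagonal (fun i => a i * b i) * star u := by
  have h : diagonal a * ((star u * u) * diagonal b) = diagonal (fun i => a i * b i) := by
    rw [hu, one_mul, diagonal_mul_diagonal]
  calc (u * diagonal a * star u) * (u * diagonal b * star u)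
      = u * (diagonal a * ((star u * u) * diagonal b)) * star u := by
        simp only [Matrix.mul_assoc]
    _ = u * diagonal (fun i => a i * b i) * star u := by rw [h]

lemma stmt7_conj_star (u : Matrix (Fin q) (Fin q) ℝ) (a : Fin q → ℝ) :
    star (u * diagonal a * star u) = u * diagonal a * star u := by
  simp only [StarMul.star_mul, star_star, Matrix.star_eq_conjTranspose,
    Matrix.diagonal_conjTranspose]
  simp [Matrix.mul_assoc]

lemma stmt7_eq_of_mulVec_eq {M N : Matrix (Fin q) (Fin q) ℝ} (h : ∀ v, M *ᵥ v = N *ᵥ v) :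
    M = N := by
  ext i j
  have := congrFun (h (Pi.single j 1)) i
  simpa [Matrix.mulVec_single] using this

lemma stmt7_range_mul_le (M N : Matrix (Fin q) (Fin q) ℝ) :
    LinearMap.range (M * N).mulVecLin ≤ LinearMap.range M.mulVecLin := by
  rw [Matrix.mulVecLin_mul]
  exact LinearMap.range_comp_le_range _ _

lemma stmt7_mul_eq_self_of_range_le {M N : Matrix (Fin q) (Fin q) ℝ} (hM : M * M = M)
    (h : LinearMap.range N.mulVecLin ≤ LinearMap.range M.mulVecLin) : M * N = N := by
  apply stmt7_eq_of_mulVec_eq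
  intro v
  obtain ⟨w, hw⟩ := h (LinearMap.mem_range_self N.mulVecLin v)
  have hw' : M *ᵥ w = N *ᵥ v := hw
  rw [← Matrix.mulVec_mulVec, ← hw', Matrix.mulVec_mulVec, hM, hw']

lemma stmt7_exists_perm (d : Fin q → ℝ) (r : ℕ) (hr : r ≤ q)
    (hcard : Fintype.card {i // d i ≠ 0} = r) :
    ∃ e : Fin q ≃ Fin q, ∀ i : Fin q, (d (e i) ≠ 0 ↔ (i : ℕ) < r) := by
  classical
  set s : Finset (Fin q) := Finset.univ.filter (fun i => d i ≠ 0) with hs_def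
  have hsc : s.card = r := by
    rw [← hcard]
    simp [hs_def, Fintype.card_subtype]
  have hscc : sᶜ.card = q - r := by
    rw [Finset.card_compl, hsc]
    simp
  have hpr : q = r + (q - r) := by omega
  let e₁ : Fin r ≃ {x // x ∈ s} := (s.orderIsoOfFin hsc).toEquiv
  let e₂ : Fin (q - r) ≃ {x // ¬ x ∈ s} :=
    (sᶜ.orderIsoOfFin hscc).toEquiv.trans (Equiv.subtypeEquivRight (fun x => by simp))
  let e : Fin q ≃ Fin q :=
    (finCongr hpr).trans ((finSumFinEquiv.symm).trans
      ((Equiv.sumCongr e₁ e₂).trans (Equiv.sumCompl (· ∈ s))))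
  refine ⟨e, fun i => ?_⟩
  have hmem : e i ∈ s ↔ (i : ℕ) < r := by
    obtain h | h := lt_or_ge (i : ℕ) r
    · have hx : finSumFinEquiv.symm (finCongr hpr i) = Sum.inl ⟨(i : ℕ), h⟩ := by
        rw [Equiv.symm_apply_eq, finSumFinEquiv_apply_left]
        ext
        simp
      simp only [e, Equiv.trans_apply, hx, Equiv.sumCongr_apply, Sum.map_inl,
        Equiv.sumCompl_apply_inl]
      exact iff_of_true (e₁ ⟨(i : ℕ), h⟩).2 h
    · have hx : finSumFinEquiv.symm (finCongr hpr i) = Sum.inr ⟨(i : ℕ) - r, by omega⟩ := by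
        rw [Equiv.symm_apply_eq, finSumFinEquiv_apply_right]
        ext
        simp
        omega
      simp only [e, Equiv.trans_apply, hx, Equiv.sumCongr_apply, Sum.map_inr,
        Equiv.sumCompl_apply_inr]
      exact iff_of_false (e₂ ⟨(i : ℕ) - r, by omega⟩).2 (by omega)
  rw [← hmem, hs_def]
  simp

/-- Two `p × p` real symmetric positive semidefinite matrices of
common rank `r` with the same column space admit a simultaneous congruence
`A₁ = G diag(I_r, 0) Gᵀ`, `A₂ = G diag(D_r, 0) Gᵀ` with `G` invertible and
`D_r` diagonal with positive entries. -/
theorem stmt7 (p r : ℕ) (hr : r ≤ p) (A₁ A₂ : Matrix (Fin p) (Fin p) ℝ)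
    (h1 : A₁.PosSemidef) (h2 : A₂.PosSemidef)
    (hr1 : A₁.rank = r) (hr2 : A₂.rank = r)
    (hrange : LinearMap.range A₁.mulVecLin = LinearMap.range A₂.mulVecLin) :
    ∃ G : Matrix (Fin p) (Fin p) ℝ, IsUnit G ∧
      ∃ d : Fin p → ℝ,
        (∀ i : Fin p, if (i : ℕ) < r then 0 < d i else d i = 0) ∧
        A₁ = G * Matrix.diagonal (fun i : Fin p => if (i : ℕ) < r then (1 : ℝ) else 0) * Gᵀ ∧
        A₂ = G * Matrix.diagonal d * Gᵀ := by
  classical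
  have hH1 : A₁.IsHermitian := h1.1
  set u : Matrix (Fin p) (Fin p) ℝ := (hH1.eigenvectorUnitary : Matrix (Fin p) (Fin p) ℝ)
    with hu_def
  have hu1 : star u * u = 1 := by
    simpa [hu_def] using Matrix.mem_unitaryGroup_iff'.mp hH1.eigenvectorUnitary.2
  have hu2 : u * star u = 1 := by
    simpa [hu_def] using Matrix.mem_unitaryGroup_iff.mp hH1.eigenvectorUnitary.2
  set μ : Fin p → ℝ := hH1.eigenvalues with hμ_def
  have hμnn : ∀ i, 0 ≤ μ i := fun i => h1.eigenvalues_nonneg i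
  have spec : A₁ = u * diagonal μ * star u := by
    have := hH1.spectral_theorem
    simpa [hu_def, hμ_def] using this
  -- square root, pseudo-inverse of sqrt, projection
  set sf : Fin p → ℝ := fun i => Real.sqrt (μ i) with hsf_def
  set tf : Fin p → ℝ := fun i => if μ i = 0 then 0 else (Real.sqrt (μ i))⁻¹ with htf_def
  set pf : Fin p → ℝ := fun i => if μ i = 0 then 0 else 1 with hpf_def
  set S : Matrix (Fin p) (Fin p) ℝ := u * diagonal sf * star u with hS_def
  set T : Matrix (Fin p) (Fin p) ℝ := u * diagonal tf * star u with hT_def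
  set P : Matrix (Fin p) (Fin p) ℝ := u * diagonal pf * star u with hP_def
  have hsqrt_ne : ∀ i, μ i ≠ 0 → Real.sqrt (μ i) ≠ 0 := fun i hi =>
    ne_of_gt (Real.sqrt_pos.mpr (lt_of_le_of_ne (hμnn i) (Ne.symm hi)))
  have hss : (fun i => sf i * sf i) = μ := by
    funext i
    exact Real.mul_self_sqrt (hμnn i)
  have hSS : S * S = A₁ := by
    rw [hS_def, stmt7_conj_mul u hu1, hss]
    exact spec.symm
  have hst : (fun i => sf i * tf i) = pf := by
    funext i
    by_cases h : μ i = 0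
    · simp [hsf_def, htf_def, hpf_def, h]
    · simp [hsf_def, htf_def, hpf_def, h, mul_inv_cancel₀ (hsqrt_ne i h)]
  have hST : S * T = P := by
    rw [hS_def, hT_def, stmt7_conj_mul u hu1, hst, hP_def]
  have hts : (fun i => tf i * sf i) = pf := by
    funext i
    by_cases h : μ i = 0
    · simp [hsf_def, htf_def, hpf_def, h]
    · simp [hsf_def, htf_def, hpf_def, h, inv_mul_cancel₀ (hsqrt_ne i h)]
  have hTS : T * S = P := by
    rw [hS_def, hT_def, stmt7_conj_mul u hu1, hts, hP_def]
  have hpp : (fun i => pf i * pf i) = pf := by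
    funext i
    by_cases h : μ i = 0 <;> simp [hpf_def, h]
  have hPP : P * P = P := by
    rw [hP_def, stmt7_conj_mul u hu1, hpp]
  have hpt : (fun i => pf i * tf i) = tf := by
    funext i
    by_cases h : μ i = 0 <;> simp [hpf_def, htf_def, h]
  have hPT : P * T = T := by
    rw [hP_def, hT_def, stmt7_conj_mul u hu1, hpt]
  have hpμ : (fun i => pf i * μ i) = μ := by
    funext i
    by_cases h : μ i = 0 <;> simp [hpf_def, h]
  have hPA1 : P * A₁ = A₁ := by
    conv_lhs => rw [spec, hP_def, stmt7_conj_mul u hu1, hpμ]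
    exact spec.symm
  have hsp : (fun i => sf i * pf i) = sf := by
    funext i
    by_cases h : μ i = 0 <;> simp [hsf_def, hpf_def, h]
  have hSP : S * P = S := by
    rw [hS_def, hP_def, stmt7_conj_mul u hu1, hsp]
  have htt : (fun i => tf i * tf i) = (fun i => tf i * tf i) := rfl
  have hμtt : (fun i => μ i * (tf i * tf i)) = pf := by
    funext i
    by_cases h : μ i = 0
    · simp [htf_def, hpf_def, h]
    · simp only [htf_def, hpf_def, if_neg h]
      rw [← mul_inv, Real.mul_self_sqrt (hμnn i), mul_inv_cancel₀ h]
  have hPeqA1TT : P = A₁ * (T * T) := by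
    conv_rhs => rw [spec, hT_def, stmt7_conj_mul u hu1, stmt7_conj_mul u hu1, hμtt]
  have hSstar : star S = S := stmt7_conj_star u sf
  have hPstar : star P = P := stmt7_conj_star u pf
  have hTstar : star T = T := stmt7_conj_star u tf
  -- range of P equals range of A₁
  have hrangeP : LinearMap.range P.mulVecLin = LinearMap.range A₁.mulVecLin := by
    apply le_antisymm
    · rw [hPeqA1TT]
      exact stmt7_range_mul_le _ _
    · conv_lhs => rw [← hPA1]
      exact stmt7_range_mul_le _ _
  have hPA2 : P * A₂ = A₂ :=
    stmt7_mul_eq_self_of_range_le hPP (le_of_eq (by rw [hrangeP, hrange]))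
  have hA2star : star A₂ = A₂ := h2.1
  have hA2P : A₂ * P = A₂ := by
    have := congrArg star hPA2
    rwa [StarMul.star_mul, hPstar, hA2star] at this
  -- the matrix C
  set C : Matrix (Fin p) (Fin p) ℝ := T * A₂ * T with hC_def
  have hCpsd : C.PosSemidef := by
    have := h2.conjTranspose_mul_mul_same T
    rwa [← Matrix.star_eq_conjTranspose, hTstar, ← hC_def] at this
  have hSCS : S * C * S = A₂ := by
    have h' : S * C * S = (S * T) * A₂ * (T * S) := by
      rw [hC_def]
      simp only [Matrix.mul_assoc]
    rw [h', hST, hTS, hPA2, hA2P]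
  have hPC : P * C = C := by
    have h' : P * C = (P * T) * A₂ * T := by
      rw [hC_def]
      simp only [Matrix.mul_assoc]
    rw [h', hPT, hC_def]
  have hCstar : star C = C := hCpsd.1
  have hCP : C * P = C := by
    have := congrArg star hPC
    rwa [StarMul.star_mul, hPstar, hCstar] at this
  have hrC : C.rank = r := by
    apply le_antisymm
    · calc C.rank ≤ (T * A₂).rank := by rw [hC_def]; exact Matrix.rank_mul_le_left _ _
        _ ≤ A₂.rank := Matrix.rank_mul_le_right _ _
        _ = r := hr2
    · calc r = A₂.rank := hr2.symm
        _ = ((S * C) * S).rank := by rw [Matrix.mul_assoc, ← hSCS, Matrix.mul_assoc]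
        _ ≤ (S * C).rank := Matrix.rank_mul_le_left _ _
        _ ≤ C.rank := Matrix.rank_mul_le_right _ _
  have hrangeC : LinearMap.range C.mulVecLin = LinearMap.range A₁.mulVecLin := by
    apply Submodule.eq_of_le_of_finrank_eq
    · rw [← hrangeP]
      conv_lhs => rw [← hPC]
      exact stmt7_range_mul_le _ _
    · have : C.rank = A₁.rank := by rw [hrC, hr1]
      simpa [Matrix.rank] using this
  -- spectral decomposition of C
  have hHC : C.IsHermitian := hCpsd.1
  have hd0nn : ∀ i, 0 ≤ hHC.eigenvalues i := fun i => hCpsd.eigenvalues_nonneg i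
  have hcard : Fintype.card {i // hHC.eigenvalues i ≠ 0} = r := by
    rw [← hHC.rank_eq_card_non_zero_eigs, hrC]
  obtain ⟨e, he⟩ := stmt7_exists_perm hHC.eigenvalues r hr hcard
  set v : Matrix (Fin p) (Fin p) ℝ := (hHC.eigenvectorUnitary : Matrix (Fin p) (Fin p) ℝ)
    with hv_def
  have hv1 : star v * v = 1 := by
    simpa [hv_def] using Matrix.mem_unitaryGroup_iff'.mp hHC.eigenvectorUnitary.2
  have hv2 : v * star v = 1 := by
    simpa [hv_def] using Matrix.mem_unitaryGroup_iff.mp hHC.eigenvectorUnitary.2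
  have specC : C = v * diagonal hHC.eigenvalues * star v := by
    have := hHC.spectral_theorem
    simpa [hv_def] using this
  set w : Matrix (Fin p) (Fin p) ℝ := v.submatrix id e with hw_def
  set δ : Fin p → ℝ := hHC.eigenvalues ∘ e with hδ_def
  have hstarw : star w = (star v).submatrix e id := by
    rw [hw_def, Matrix.star_eq_conjTranspose, Matrix.star_eq_conjTranspose,
      Matrix.conjTranspose_submatrix]
  have hw1 : star w * w = 1 := by
    have h' := Matrix.submatrix_mul_equiv (star v) v ⇑e (Equiv.refl (Fin p)) ⇑e
    simp only [Equiv.coe_refl] at h'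
    rw [hstarw, hw_def, h', hv1, Matrix.submatrix_one_equiv]
  have hw2 : w * star w = 1 := by
    have h' := Matrix.submatrix_mul_equiv v (star v) id e id
    rw [hstarw, hw_def, h', hv2, Matrix.submatrix_id_id]
  have specCw : C = w * diagonal δ * star w := by
    rw [hw_def, hstarw, hδ_def, ← Matrix.submatrix_diagonal_equiv]
    have h1' := Matrix.submatrix_mul_equiv v (diagonal hHC.eigenvalues) id e ⇑e
    rw [h1']
    have h2' := Matrix.submatrix_mul_equiv (v * diagonal hHC.eigenvalues) (star v) id e id
    rw [h2', Matrix.submatrix_id_id, ← specC]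
  have hδr : ∀ i : Fin p, (δ i ≠ 0 ↔ (i : ℕ) < r) := fun i => he i
  have hδnn : ∀ i, 0 ≤ δ i := fun i => hd0nn (e i)
  -- the projection Q
  set εf : Fin p → ℝ := fun i => if (i : ℕ) < r then (1 : ℝ) else 0 with hεf_def
  set Q : Matrix (Fin p) (Fin p) ℝ := w * diagonal εf * star w with hQ_def
  have hεδ : (fun i => εf i * δ i) = δ := by
    funext i
    by_cases h : (i : ℕ) < r
    · simp [hεf_def, h]
    · simp [hεf_def, h, of_not_not (mt (hδr i).mp h)]
  have hQC : Q * C = C := by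
    conv_lhs => rw [hQ_def, specCw, stmt7_conj_mul w hw1, hεδ]
    exact specCw.symm
  have hεε : (fun i => εf i * εf i) = εf := by
    funext i
    by_cases h : (i : ℕ) < r <;> simp [hεf_def, h]
  have hQQ : Q * Q = Q := by
    rw [hQ_def, stmt7_conj_mul w hw1, hεε]
  have hQstar : star Q = Q := stmt7_conj_star w εf
  have hδinv : (fun i : Fin p => δ i * (if (i : ℕ) < r then (δ i)⁻¹ else 0)) = εf := by
    funext i
    by_cases h : (i : ℕ) < r
    · simp [hεf_def, h, mul_inv_cancel₀ ((hδr i).mpr h)]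
    · simp [hεf_def, h]
  have hQfact : Q = C * (w * diagonal (fun i : Fin p => if (i : ℕ) < r then (δ i)⁻¹ else 0) * star w) := by
    conv_rhs => rw [specCw, stmt7_conj_mul w hw1, hδinv]
  have hrangeQ : LinearMap.range Q.mulVecLin = LinearMap.range P.mulVecLin := by
    rw [hrangeP, ← hrangeC]
    apply le_antisymm
    · rw [hQfact]
      exact stmt7_range_mul_le _ _
    · conv_lhs => rw [← hQC]
      exact stmt7_range_mul_le _ _
  have hPQ : P * Q = Q := stmt7_mul_eq_self_of_range_le hPP (le_of_eq hrangeQ)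
  have hQP : Q * P = P := stmt7_mul_eq_self_of_range_le hQQ (le_of_eq hrangeQ.symm)
  have hQeqP : Q = P := by
    have h' := congrArg star hQP
    rw [StarMul.star_mul, hQstar, hPstar] at h'
    rw [← hPQ, h']
  -- construct G
  set ff : Fin p → ℝ := fun i => sf i + 1 - pf i with hff_def
  have hF : S + 1 - P = u * diagonal ff * star u := by
    rw [hS_def, hP_def, hff_def]
    have hdiag : (diagonal (fun i => sf i + 1 - pf i) : Matrix (Fin p) (Fin p) ℝ)
        = diagonal sf + 1 - diagonal pf := by
      rw [← Matrix.diagonal_one, ← Matrix.diagonal_sub, ← Matrix.diagonal_add]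
    rw [hdiag, Matrix.mul_sub, Matrix.mul_add, Matrix.mul_one, Matrix.sub_mul,
      Matrix.add_mul, hu2]
  have hffne : ∀ i, ff i ≠ 0 := by
    intro i
    rw [hff_def]
    by_cases h : μ i = 0
    · simp [hsf_def, hpf_def, h]
    · have : 0 < Real.sqrt (μ i) := Real.sqrt_pos.mpr (lt_of_le_of_ne (hμnn i) (Ne.symm h))
      simp only [hsf_def, hpf_def, if_neg h]
      nlinarith
  set G : Matrix (Fin p) (Fin p) ℝ := (S + 1 - P) * w with hG_def
  have hdetF : (S + 1 - P).det = ∏ i, ff i := by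
    rw [hF, Matrix.det_mul, Matrix.det_mul, Matrix.det_diagonal, mul_comm u.det _,
      mul_assoc, ← Matrix.det_mul, hu2, Matrix.det_one, mul_one]
  have hunitG : IsUnit G := by
    rw [hG_def, Matrix.isUnit_iff_isUnit_det, Matrix.det_mul]
    apply IsUnit.mul
    · rw [hdetF]
      exact isUnit_iff_ne_zero.mpr (Finset.prod_ne_zero_iff.mpr (fun i _ => hffne i))
    · exact IsUnit.of_mul_eq_one _ (by rw [← Matrix.det_mul, hw2, Matrix.det_one])
  have hFstar : star (S + 1 - P) = S + 1 - P := by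
    rw [star_sub, star_add, hSstar, hPstar, star_one]
  have hGT : Gᵀ = star w * (S + 1 - P) := by
    rw [← stmt7_star_eq_transpose, hG_def, StarMul.star_mul, hFstar]
  -- final computations
  have hFP : (S + 1 - P) * P = S := by
    rw [Matrix.sub_mul, Matrix.add_mul, Matrix.one_mul, hSP, hPP]
    abel
  have hSF : S * (S + 1 - P) = A₁ := by
    rw [Matrix.mul_sub, Matrix.mul_add, Matrix.mul_one, hSP, hSS]
    abel
  have hFC : (S + 1 - P) * C = S * C := by
    rw [Matrix.sub_mul, Matrix.add_mul, Matrix.one_mul, hPC]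
    abel
  have hSCF : (S * C) * (S + 1 - P) = A₂ := by
    rw [Matrix.mul_sub, Matrix.mul_add, Matrix.mul_one, Matrix.mul_assoc S C P, hCP, hSCS]
    abel
  refine ⟨G, hunitG, δ, ?_, ?_, ?_⟩
  · intro i
    by_cases h : (i : ℕ) < r
    · simp only [if_pos h]
      exact lt_of_le_of_ne (hδnn i) (Ne.symm ((hδr i).mpr h))
    · simp only [if_neg h]
      exact of_not_not (mt (hδr i).mp h)
  · have hmid : G * diagonal εf * Gᵀ = (S + 1 - P) * Q * (S + 1 - P) := by
      rw [hG_def, hGT, hQ_def]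
      simp only [Matrix.mul_assoc]
    rw [hmid, hQeqP, hFP, hSF]
  · have hmid : G * diagonal δ * Gᵀ = (S + 1 - P) * C * (S + 1 - P) := by
      rw [hG_def, hGT, specCw]
      simp only [Matrix.mul_assoc]
    rw [hmid, hFC, hSCF]
end

section
/- Let A₁, A₂ be p×p real symmetric positive semidefinite matrices with equal column spaces, and let A⁺ denote Moore–Penrose pseudoinverse. Then for all vectors x, y ∈ ℝᵖ lying in the common column space: (x + y)ᵀ(A₁ + A₂)⁺(x + y) ≤ xᵀA₁⁺x + yᵀA₂⁺y. -/
open Matrix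

/-- `B` is the Moore–Penrose pseudoinverse of `A` (the four Penrose conditions). -/
def IsMoorePenrose (p : ℕ) (A B : Matrix (Fin p) (Fin p) ℝ) : Prop :=
  A * B * A = A ∧ B * A * B = B ∧ (A * B)ᵀ = A * B ∧ (B * A)ᵀ = B * A

private lemma mp_unique {p : ℕ} {A B C : Matrix (Fin p) (Fin p) ℝ}
    (hB : IsMoorePenrose p A B) (hC : IsMoorePenrose p A C) : B = C := by
  obtain ⟨hB1, hB2, hB3, hB4⟩ := hB
  obtain ⟨hC1, hC2, hC3, hC4⟩ := hC
  have hAB : A * B = A * C := by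
    calc A * B = (A * C * A) * B := by rw [hC1]
    _ = (A * C) * (A * B) := by rw [Matrix.mul_assoc, Matrix.mul_assoc]
    _ = (A * C)ᵀ * (A * B)ᵀ := by rw [hC3, hB3]
    _ = ((A * B) * (A * C))ᵀ := by
        simp only [transpose_mul, Matrix.mul_assoc]
    _ = ((A * B * A) * C)ᵀ := by simp only [Matrix.mul_assoc]
    _ = (A * C)ᵀ := by rw [hB1]
    _ = A * C := hC3
  have hBA : B * A = C * A := by
    calc B * A = B * (A * C * A) := by rw [hC1]
    _ = (B * A) * (C * A) := by simp only [Matrix.mul_assoc]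
    _ = (B * A)ᵀ * (C * A)ᵀ := by rw [hB4, hC4]
    _ = ((C * A) * (B * A))ᵀ := by
        simp only [transpose_mul, Matrix.mul_assoc]
    _ = (C * (A * B * A))ᵀ := by simp only [Matrix.mul_assoc]
    _ = (C * A)ᵀ := by rw [hB1]
    _ = C * A := hC4
  calc B = B * A * B := hB2.symm
  _ = C * A * B := by rw [hBA]
  _ = C * (A * B) := by rw [Matrix.mul_assoc]
  _ = C * (A * C) := by rw [hAB]
  _ = C * A * C := by rw [Matrix.mul_assoc]
  _ = C := hC2

private lemma mp_symm {p : ℕ} {A B : Matrix (Fin p) (Fin p) ℝ}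
    (hA : Aᵀ = A) (hB : IsMoorePenrose p A B) : Bᵀ = B := by
  obtain ⟨hB1, hB2, hB3, hB4⟩ := hB
  have e3 : A * Bᵀ = B * A := by
    calc A * Bᵀ = Aᵀ * Bᵀ := by rw [hA]
    _ = (B * A)ᵀ := (transpose_mul B A).symm
    _ = B * A := hB4
  have e4 : Bᵀ * A = A * B := by
    calc Bᵀ * A = Bᵀ * Aᵀ := by rw [hA]
    _ = (A * B)ᵀ := (transpose_mul A B).symm
    _ = A * B := hB3
  have h : IsMoorePenrose p A Bᵀ := by
    refine ⟨?_, ?_, ?_, ?_⟩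
    · have h1' : (A * B * A)ᵀ = A * Bᵀ * A := by
        simp only [transpose_mul, transpose_transpose, hA, Matrix.mul_assoc]
      rw [← h1', hB1, hA]
    · have h2' : (B * A * B)ᵀ = Bᵀ * A * Bᵀ := by
        simp only [transpose_mul, transpose_transpose, hA, Matrix.mul_assoc]
      rw [← h2', hB2]
    · rw [e3]; exact hB4
    · rw [e4]; exact hB3
  exact mp_unique h ⟨hB1, hB2, hB3, hB4⟩

private lemma dot_shift {p : ℕ} (A : Matrix (Fin p) (Fin p) ℝ) (v w : Fin p → ℝ) :
    v ⬝ᵥ A *ᵥ w = Aᵀ *ᵥ v ⬝ᵥ w := by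
  rw [dotProduct_mulVec, mulVec_transpose]

private lemma dot_shift' {p : ℕ} (A : Matrix (Fin p) (Fin p) ℝ) (v w : Fin p → ℝ) :
    A *ᵥ v ⬝ᵥ w = v ⬝ᵥ Aᵀ *ᵥ w := by
  rw [dot_shift, transpose_transpose]

/-- For psd matrices `A₁, A₂` with equal column spaces and vectors
`x, y` in the common column space,
`(x+y)ᵀ(A₁+A₂)⁺(x+y) ≤ xᵀA₁⁺x + yᵀA₂⁺y`. -/
theorem stmt8 (p : ℕ) (A₁ A₂ P₁ P₂ P₁₂ : Matrix (Fin p) (Fin p) ℝ)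
    (h1 : A₁.PosSemidef) (h2 : A₂.PosSemidef)
    (hrange : LinearMap.range A₁.mulVecLin = LinearMap.range A₂.mulVecLin)
    (hP1 : IsMoorePenrose p A₁ P₁) (hP2 : IsMoorePenrose p A₂ P₂)
    (hP12 : IsMoorePenrose p (A₁ + A₂) P₁₂)
    (x y : Fin p → ℝ)
    (hx : x ∈ LinearMap.range A₁.mulVecLin)
    (hy : y ∈ LinearMap.range A₂.mulVecLin) :
    (x + y) ⬝ᵥ P₁₂.mulVec (x + y) ≤ x ⬝ᵥ P₁.mulVec x + y ⬝ᵥ P₂.mulVec y := by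
  obtain ⟨u, hu⟩ := hx
  obtain ⟨v, hv⟩ := hy
  have hu' : A₁ *ᵥ u = x := hu
  have hv' : A₂ *ᵥ v = y := hv
  have hA1 : A₁ᵀ = A₁ := h1.1
  have hA2 : A₂ᵀ = A₂ := h2.1
  have hA12 : (A₁ + A₂)ᵀ = A₁ + A₂ := by rw [transpose_add, hA1, hA2]
  have hPs : P₁₂ᵀ = P₁₂ := mp_symm hA12 hP12
  set z := P₁₂ *ᵥ (x + y) with hz
  have key : z ⬝ᵥ (A₁ + A₂) *ᵥ z = (x + y) ⬝ᵥ z := by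
    calc z ⬝ᵥ (A₁ + A₂) *ᵥ z
        = P₁₂ *ᵥ (x + y) ⬝ᵥ ((A₁ + A₂) * P₁₂) *ᵥ (x + y) := by rw [hz, mulVec_mulVec]
    _ = (x + y) ⬝ᵥ P₁₂ᵀ *ᵥ (((A₁ + A₂) * P₁₂) *ᵥ (x + y)) := dot_shift' _ _ _
    _ = (x + y) ⬝ᵥ (P₁₂ * (A₁ + A₂) * P₁₂) *ᵥ (x + y) := by
        rw [hPs, mulVec_mulVec, Matrix.mul_assoc]
    _ = (x + y) ⬝ᵥ P₁₂ *ᵥ (x + y) := by rw [hP12.2.1]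
    _ = (x + y) ⬝ᵥ z := by rw [hz]
  have cs : ∀ (A : Matrix (Fin p) (Fin p) ℝ), A.PosSemidef → ∀ w : Fin p → ℝ,
      2 * (z ⬝ᵥ A *ᵥ w) ≤ z ⬝ᵥ A *ᵥ z + w ⬝ᵥ A *ᵥ w := by
    intro A hA w
    have hAt : Aᵀ = A := hA.1
    have h0 : 0 ≤ (z - w) ⬝ᵥ A *ᵥ (z - w) := by
      have := hA.dotProduct_mulVec_nonneg (z - w)
      simpa using this
    have hsym : w ⬝ᵥ A *ᵥ z = z ⬝ᵥ A *ᵥ w := by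
      rw [dot_shift, hAt, dotProduct_comm]
    rw [mulVec_sub, dotProduct_sub, sub_dotProduct, sub_dotProduct, hsym] at h0
    linarith
  have e1 : x ⬝ᵥ P₁ *ᵥ x = u ⬝ᵥ A₁ *ᵥ u := by
    calc x ⬝ᵥ P₁ *ᵥ x = A₁ᵀ *ᵥ u ⬝ᵥ P₁ *ᵥ (A₁ *ᵥ u) := by rw [hA1, hu']
    _ = u ⬝ᵥ A₁ *ᵥ (P₁ *ᵥ (A₁ *ᵥ u)) := (dot_shift A₁ u _).symm
    _ = u ⬝ᵥ (A₁ * P₁ * A₁) *ᵥ u := by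
        rw [mulVec_mulVec, mulVec_mulVec]
    _ = u ⬝ᵥ A₁ *ᵥ u := by rw [hP1.1]
  have e2 : y ⬝ᵥ P₂ *ᵥ y = v ⬝ᵥ A₂ *ᵥ v := by
    calc y ⬝ᵥ P₂ *ᵥ y = A₂ᵀ *ᵥ v ⬝ᵥ P₂ *ᵥ (A₂ *ᵥ v) := by rw [hA2, hv']
    _ = v ⬝ᵥ A₂ *ᵥ (P₂ *ᵥ (A₂ *ᵥ v)) := (dot_shift A₂ v _).symm
    _ = v ⬝ᵥ (A₂ * P₂ * A₂) *ᵥ v := by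
        rw [mulVec_mulVec, mulVec_mulVec]
    _ = v ⬝ᵥ A₂ *ᵥ v := by rw [hP2.1]
  have c1 := cs A₁ h1 u
  have c2 := cs A₂ h2 v
  have hzx : z ⬝ᵥ A₁ *ᵥ u = z ⬝ᵥ x := by rw [hu']
  have hzy : z ⬝ᵥ A₂ *ᵥ v = z ⬝ᵥ y := by rw [hv']
  have hsplit : z ⬝ᵥ (A₁ + A₂) *ᵥ z = z ⬝ᵥ A₁ *ᵥ z + z ⬝ᵥ A₂ *ᵥ z := by
    rw [add_mulVec, dotProduct_add]
  have hdc : (x + y) ⬝ᵥ z = z ⬝ᵥ x + z ⬝ᵥ y := by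
    rw [dotProduct_comm, dotProduct_add]
  have goal_eq : (x + y) ⬝ᵥ P₁₂ *ᵥ (x + y) = (x + y) ⬝ᵥ z := by rw [hz]
  rw [goal_eq, e1, e2]
  rw [hzx] at c1
  rw [hzy] at c2
  rw [hsplit, hdc] at key
  linarith
end

section
/- The map (x, A) ↦ xᵀA⁻¹x is jointly convex on ℝᵖ × {positive definite p×p matrices}: for positive definite S, T, vectors x, y ∈ ℝᵖ, and α ∈ (0,1), (αx + (1−α)y)ᵀ(αS + (1−α)T)⁻¹(αx + (1−α)y) ≤ α·xᵀS⁻¹x + (1−α)·yᵀT⁻¹y. -/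
open Matrix

lemma posdef_smul9 {p : ℕ} {A : Matrix (Fin p) (Fin p) ℝ} (hA : A.PosDef)
    {c : ℝ} (hc : 0 < c) : (c • A).PosDef := by
  refine Matrix.PosDef.of_dotProduct_mulVec_pos ?_ (fun v hv => ?_)
  · unfold Matrix.IsHermitian
    rw [conjTranspose_smul, hA.1.eq, star_trivial]
  · rw [smul_mulVec, dotProduct_smul, smul_eq_mul]
    exact mul_pos hc (hA.dotProduct_mulVec_pos hv)

lemma aux9 {p : ℕ} (A : Matrix (Fin p) (Fin p) ℝ) (hA : A.PosDef)
    (x z : Fin p → ℝ) :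
    2 * (z ⬝ᵥ x) - z ⬝ᵥ A.mulVec z ≤ x ⬝ᵥ A⁻¹.mulVec x := by
  have hInv : A⁻¹.PosDef := hA.inv
  have h0 : 0 ≤ (x - A.mulVec z) ⬝ᵥ A⁻¹.mulVec (x - A.mulVec z) := by
    have := hInv.posSemidef.dotProduct_mulVec_nonneg (x - A.mulVec z)
    simpa using this
  have hdet : IsUnit A.det := hA.det_pos.ne'.isUnit
  have hAinv : A⁻¹ * A = 1 := nonsing_inv_mul A hdet
  have hinvA : A * A⁻¹ = 1 := mul_nonsing_inv A hdet
  have hsym : Aᵀ = A := hA.1.eq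
  have h1 : A⁻¹.mulVec (A.mulVec z) = z := by
    rw [mulVec_mulVec, hAinv, one_mulVec]
  have h2 : (A.mulVec z) ⬝ᵥ A⁻¹.mulVec x = z ⬝ᵥ x := by
    rw [← vecMul_transpose, hsym, dotProduct_mulVec, vecMul_vecMul, hinvA,
      vecMul_one]
  have h3 : (A.mulVec z) ⬝ᵥ z = z ⬝ᵥ A.mulVec z := by
    rw [dotProduct_mulVec, ← vecMul_transpose, hsym]
  have hxz : x ⬝ᵥ z = z ⬝ᵥ x := dotProduct_comm x z
  rw [mulVec_sub, dotProduct_sub, sub_dotProduct, sub_dotProduct, h1, h2] at h0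
  rw [hxz, h3] at h0
  linarith

/-- Joint convexity of `(x, A) ↦ xᵀA⁻¹x` on `ℝᵖ × {posdef}`. -/
theorem stmt9 (p : ℕ) (S T : Matrix (Fin p) (Fin p) ℝ)
    (hS : S.PosDef) (hT : T.PosDef) (x y : Fin p → ℝ)
    (α : ℝ) (hα : α ∈ Set.Ioo (0 : ℝ) 1) :
    (α • x + (1 - α) • y) ⬝ᵥ (α • S + (1 - α) • T)⁻¹.mulVec (α • x + (1 - α) • y) ≤
      α * (x ⬝ᵥ S⁻¹.mulVec x) + (1 - α) * (y ⬝ᵥ T⁻¹.mulVec y) := by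
  obtain ⟨hα0, hα1⟩ := hα
  have hα1' : 0 < 1 - α := by linarith
  set M : Matrix (Fin p) (Fin p) ℝ := α • S + (1 - α) • T with hM
  have hMpd : M.PosDef := (posdef_smul9 hS hα0).add (posdef_smul9 hT hα1')
  set v : Fin p → ℝ := α • x + (1 - α) • y with hv
  set z : Fin p → ℝ := M⁻¹.mulVec v with hz
  have hMz : M.mulVec z = v := by
    rw [hz, mulVec_mulVec, mul_nonsing_inv M hMpd.det_pos.ne'.isUnit, one_mulVec]
  have key : v ⬝ᵥ M⁻¹.mulVec v = 2 * (z ⬝ᵥ v) - z ⬝ᵥ M.mulVec z := by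
    rw [hMz, ← hz, dotProduct_comm v z]; ring
  have hS' := aux9 S hS x z
  have hT' := aux9 T hT y z
  have expand : 2 * (z ⬝ᵥ v) - z ⬝ᵥ M.mulVec z =
      α * (2 * (z ⬝ᵥ x) - z ⬝ᵥ S.mulVec z) +
      (1 - α) * (2 * (z ⬝ᵥ y) - z ⬝ᵥ T.mulVec z) := by
    rw [hv, hM, add_mulVec, smul_mulVec, smul_mulVec,
      dotProduct_add, dotProduct_smul, dotProduct_smul,
      dotProduct_add, dotProduct_smul, dotProduct_smul]
    simp only [smul_eq_mul]; ring
  rw [key, expand]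
  have := mul_le_mul_of_nonneg_left hS' hα0.le
  have := mul_le_mul_of_nonneg_left hT' hα1'.le
  linarith
end

section
/- The set {(x̄, S) : x̄ ∈ ℝᵖ, S a p×p positive definite matrix, x̄ᵀS⁻¹x̄ ≤ k} is convex (as a subset of ℝᵖ × Sym(p,ℝ)) for every k ≥ 0. -/
open Matrix

section Aux

variable {m : Type*} [Fintype m]

lemma myPosSemidef.smul {M : Matrix m m ℝ} (hM : M.PosSemidef) {a : ℝ} (ha : 0 ≤ a) :
    (a • M).PosSemidef := by
  refine .of_dotProduct_mulVec_nonneg ?_ fun x => ?_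
  · rw [Matrix.IsHermitian, conjTranspose_smul, hM.1.eq, star_trivial]
  · rw [smul_mulVec, dotProduct_smul, smul_eq_mul]
    exact mul_nonneg ha (hM.dotProduct_mulVec_nonneg x)

lemma myPosSemidef.add {M N : Matrix m m ℝ} (hM : M.PosSemidef) (hN : N.PosSemidef) :
    (M + N).PosSemidef := by
  refine .of_dotProduct_mulVec_nonneg (hM.1.add hN.1) fun x => ?_
  rw [add_mulVec, dotProduct_add]
  exact add_nonneg (hM.dotProduct_mulVec_nonneg x) (hN.dotProduct_mulVec_nonneg x)

lemma myPosDef.smul {M : Matrix m m ℝ} (hM : M.PosDef) {a : ℝ} (ha : 0 < a) :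
    (a • M).PosDef := by
  refine .of_dotProduct_mulVec_pos ?_ fun x hx => ?_
  · rw [Matrix.IsHermitian, conjTranspose_smul, hM.1.eq, star_trivial]
  · rw [smul_mulVec, dotProduct_smul, smul_eq_mul]
    exact mul_pos ha (hM.dotProduct_mulVec_pos hx)

lemma myPosDef.add_posSemidef {M N : Matrix m m ℝ} (hM : M.PosDef) (hN : N.PosSemidef) :
    (M + N).PosDef := by
  refine .of_dotProduct_mulVec_pos (hM.1.add hN.1) fun x hx => ?_
  rw [add_mulVec, dotProduct_add]
  exact add_pos_of_pos_of_nonneg (hM.dotProduct_mulVec_pos hx) (hN.dotProduct_mulVec_nonneg x)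

lemma one_dim_posSemidef_iff {M : Matrix (Fin 1) (Fin 1) ℝ} :
    M.PosSemidef ↔ 0 ≤ M 0 0 := by
  constructor
  · intro h
    have := h.dotProduct_mulVec_nonneg (fun _ => 1)
    simpa [dotProduct, mulVec, Fin.sum_univ_one] using this
  · intro h
    refine .of_dotProduct_mulVec_nonneg ?_ fun x => ?_
    · ext i j
      rw [Subsingleton.elim i 0, Subsingleton.elim j 0]
      simp
    · have : star x ⬝ᵥ M *ᵥ x = M 0 0 * (x 0 * x 0) := by
        simp [dotProduct, mulVec, Fin.sum_univ_one]
        ring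
      rw [this]
      exact mul_nonneg h (mul_self_nonneg _)

lemma key {p : ℕ} {S : Matrix (Fin p) (Fin p) ℝ} (hS : S.PosDef) (x : Fin p → ℝ) (k : ℝ) :
    (x ⬝ᵥ S⁻¹.mulVec x ≤ k) ↔
      (fromBlocks S (replicateCol (Fin 1) x) (replicateRow (Fin 1) x)
        (Matrix.of fun _ _ => k)).PosSemidef := by
  haveI : Invertible S := hS.isUnit.invertible
  have hrow : replicateRow (Fin 1) x = (replicateCol (Fin 1) x)ᴴ := by
    rw [conjTranspose_replicateCol]
    simp
  rw [hrow, Matrix.PosDef.fromBlocks₁₁ _ _ hS, one_dim_posSemidef_iff]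
  have hentry : ((replicateCol (Fin 1) x)ᴴ * S⁻¹ * replicateCol (Fin 1) x) 0 0 = x ⬝ᵥ S⁻¹.mulVec x := by
    simp only [Matrix.mul_apply, conjTranspose_replicateCol, dotProduct, mulVec, replicateCol, replicateRow,
      Matrix.of_apply, Matrix.conjTranspose_apply, Pi.star_apply, star_trivial, Finset.mul_sum, Finset.sum_mul]
    rw [Finset.sum_comm]
    exact Finset.sum_congr rfl fun i _ => Finset.sum_congr rfl fun j _ => by ring
  simp only [Matrix.sub_apply, Matrix.of_apply, hentry]
  constructor <;> intro h <;> linarith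

end Aux

/-- The set `{(x̄, S) : S posdef, x̄ᵀS⁻¹x̄ ≤ k}` is convex in
`ℝᵖ × Sym(p, ℝ)` for every `k ≥ 0`. -/
theorem stmt10 (p : ℕ) (k : ℝ) (hk : 0 ≤ k) :
    Convex ℝ {q : (Fin p → ℝ) × Matrix (Fin p) (Fin p) ℝ |
      q.2.PosDef ∧ q.1 ⬝ᵥ q.2⁻¹.mulVec q.1 ≤ k} := by
  rintro ⟨x, S⟩ ⟨hS, hxS⟩ ⟨y, T⟩ ⟨hT, hyT⟩ a b ha hb hab
  simp only [Set.mem_setOf_eq, Prod.fst_add, Prod.snd_add, Prod.smul_fst, Prod.smul_snd,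
    smul_eq_mul] at *
  have hcomb : (a • S + b • T).PosDef := by
    rcases ha.eq_or_lt with rfl | ha'
    · rw [zero_add] at hab
      subst hab
      simpa using hT
    · exact (myPosDef.smul hS ha').add_posSemidef (myPosSemidef.smul hT.posSemidef hb)
  refine ⟨hcomb, ?_⟩
  rw [key hcomb]
  have hblock : fromBlocks (a • S + b • T) (replicateCol (Fin 1) (a • x + b • y))
      (replicateRow (Fin 1) (a • x + b • y)) (Matrix.of fun _ _ => k) =
      a • fromBlocks S (replicateCol (Fin 1) x) (replicateRow (Fin 1) x) (Matrix.of fun _ _ => k) +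
      b • fromBlocks T (replicateCol (Fin 1) y) (replicateRow (Fin 1) y) (Matrix.of fun _ _ => k) := by
    have hK : (a • (Matrix.of fun _ _ => k) + b • (Matrix.of fun _ _ => k) :
        Matrix (Fin 1) (Fin 1) ℝ) = Matrix.of fun _ _ => k := by
      ext i j
      simp only [Matrix.add_apply, Matrix.smul_apply, Matrix.of_apply, smul_eq_mul]
      nlinarith [hab]
    rw [Matrix.fromBlocks_smul, Matrix.fromBlocks_smul, Matrix.fromBlocks_add, hK,
      replicateCol_add, replicateCol_smul, replicateCol_smul, replicateRow_add, replicateRow_smul, replicateRow_smul]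
  rw [hblock]
  exact myPosSemidef.add (myPosSemidef.smul ((key hS x k).mp hxS) ha)
    (myPosSemidef.smul ((key hT y k).mp hyT) hb)
end
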